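/- Realization respects isomorphism: for typing contexts Γ₁ and Γ₂ containing no unrestricted bindings, if the graph interpretations are isomorphic, ⟦Γ₁⟧ ≃ ⟦Γ₂⟧, then the realizations are syntactically equivalent, ⌜⟦Γ₁⟧⌝ ≡ ⌜⟦Γ₂⟧⌝. -/

import Mathlib

set_option autoImplicit false
set_option linter.unusedVariables false

namespace LawOrder

/-! ## Graph representations -/

structure Graph (B : Type) where
  n : ℕ
  label : ℕ → B
  edge : ℕ → ℕ → Prop
  edge_lt : ∀ i j, edge i j → i < n ∧ j < n

namespace Graph

variable {B : Type}

/-- The edge relation is acyclic. -/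
def Acyclic (G : Graph B) : Prop := ∀ i, ¬ Relation.TransGen G.edge i i

/-- The empty graph representation. -/
def zero (B : Type) [Inhabited B] : Graph B :=
  ⟨0, fun _ => default, fun _ _ => False, fun _ _ h => h.elim⟩

/-- Union of two graph representations: disjoint union, second part shifted. -/
def union (G₁ G₂ : Graph B) : Graph B where
  n := G₁.n + G₂.n
  label := fun i => if i < G₁.n then G₁.label i else G₂.label (i - G₁.n)
  edge := fun i j =>
    G₁.edge i j ∨ (G₁.n ≤ i ∧ G₁.n ≤ j ∧ G₂.edge (i - G₁.n) (j - G₁.n))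
  edge_lt := by
    intro i j h
    rcases h with h | ⟨hi, hj, h⟩
    · have := G₁.edge_lt i j h; omega
    · have := G₂.edge_lt _ _ h; omega

/-- Join of two graph representations: union plus all edges from the first
    part to the second part. -/
def join (G₁ G₂ : Graph B) : Graph B where
  n := G₁.n + G₂.n
  label := fun i => if i < G₁.n then G₁.label i else G₂.label (i - G₁.n)
  edge := fun i j =>
    G₁.edge i j ∨ (G₁.n ≤ i ∧ G₁.n ≤ j ∧ G₂.edge (i - G₁.n) (j - G₁.n)) ∨
      (i < G₁.n ∧ G₁.n ≤ j ∧ j < G₁.n + G₂.n)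
  edge_lt := by
    intro i j h
    rcases h with h | ⟨hi, hj, h⟩ | ⟨hi, hj₁, hj₂⟩
    · have := G₁.edge_lt i j h; omega
    · have := G₂.edge_lt _ _ h; omega
    · omega

/-- Isomorphism of graph representations. -/
def Iso (G₁ G₂ : Graph B) : Prop :=
  G₁.n = G₂.n ∧ ∃ f : Fin G₁.n → Fin G₁.n, Function.Bijective f ∧
    (∀ i j : Fin G₁.n, G₁.edge (f i).val (f j).val ↔ G₂.edge i.val j.val) ∧
    (∀ i : Fin G₁.n, G₁.label (f i).val = G₂.label i.val)

/-- `G₁` is a spanning graph representation of `G₂`: same vertices and labels,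
    and the edges of `G₁` are contained in those of `G₂`. -/
def Spanning (G₁ G₂ : Graph B) : Prop :=
  G₁.n = G₂.n ∧ (∀ i, i < G₁.n → G₁.label i = G₂.label i) ∧
    ∀ i j, G₁.edge i j → G₂.edge i j

/-- `f` is a topological ordering of `G`: `f` enumerates the vertices so that
    edges always point forward. -/
def IsTopOrder (G : Graph B) (f : Equiv.Perm (Fin G.n)) : Prop :=
  ∀ i j : Fin G.n, G.edge i.val j.val → f.symm i < f.symm j

/-- `G` has exactly one topological ordering. -/
def Traceable (G : Graph B) : Prop :=
  ∃! f : Equiv.Perm (Fin G.n), G.IsTopOrder f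

/-- The identity enumeration is a topological ordering: all edges increase. -/
def TopOrdered (G : Graph B) : Prop := ∀ i j, G.edge i j → i < j

/-- `k` is a union cut of `G`: no edge crosses from below `k` to `k` or above. -/
def UnionCut (G : Graph B) (k : ℕ) : Prop :=
  0 < k ∧ k < G.n ∧ ∀ i j, i < k → k ≤ j → ¬ G.edge i j

/-- `k` is a join cut of `G`: every pair crossing from below `k` to `k` or
    above (within range) is an edge. -/
def JoinCut (G : Graph B) (k : ℕ) : Prop :=
  0 < k ∧ k < G.n ∧ ∀ i j, i < k → k ≤ j → j < G.n → G.edge i j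

/-- Lower part of the index cut at `k`. -/
def cutLo (G : Graph B) (k : ℕ) : Graph B where
  n := k
  label := G.label
  edge := fun i j => G.edge i j ∧ i < k ∧ j < k
  edge_lt := fun i j h => ⟨h.2.1, h.2.2⟩

/-- Upper part of the index cut at `k` (re-indexed from 0). -/
def cutHi (G : Graph B) (k : ℕ) : Graph B where
  n := G.n - k
  label := fun i => G.label (i + k)
  edge := fun i j => G.edge (i + k) (j + k)
  edge_lt := by
    intro i j h
    have := G.edge_lt _ _ h
    omega

/-- Weak connectedness: any two vertices are joined by an undirected path. -/
def WeaklyConnected (G : Graph B) : Prop :=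
  ∀ i j, i < G.n → j < G.n →
    Relation.ReflTransGen (fun a b => G.edge a b ∨ G.edge b a) i j

/-- Union of a nonempty sequence of graph representations. -/
def unionList (G : Graph B) (L : List (Graph B)) : Graph B :=
  L.foldl union G

end Graph

/-! ## Contexts built from bindings with ordered and unordered composition -/

inductive GCtx (B : Type) where
  | empty : GCtx B
  | bind : B → GCtx B
  | comma : GCtx B → GCtx B → GCtx B
  | par : GCtx B → GCtx B → GCtx B

/-- Context patterns: contexts with a single hole. -/
inductive GPat (B : Type) where
  | hole : GPat B
  | commaL : GPat B → GCtx B → GPat B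
  | commaR : GCtx B → GPat B → GPat B
  | parL : GPat B → GCtx B → GPat B
  | parR : GCtx B → GPat B → GPat B

def GPat.fill {B : Type} : GPat B → GCtx B → GCtx B
  | .hole, Γ => Γ
  | .commaL G Δ, Γ => .comma (G.fill Γ) Δ
  | .commaR Δ G, Γ => .comma Δ (G.fill Γ)
  | .parL G Δ, Γ => .par (G.fill Γ) Δ
  | .parR Δ G, Γ => .par Δ (G.fill Γ)

def GCtx.toList {B : Type} : GCtx B → List B
  | .empty => []
  | .bind b => [b]
  | .comma Γ₁ Γ₂ => Γ₁.toList ++ Γ₂.toList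
  | .par Γ₁ Γ₂ => Γ₁.toList ++ Γ₂.toList

/-- Graph part of the interpretation of a context: unrestricted bindings
    contribute no vertex, ordered bindings one vertex; `comma` is join,
    `par` is union. -/
def GCtx.interpG {B : Type} [Inhabited B] (unr : B → Bool) : GCtx B → Graph B
  | .empty => Graph.zero B
  | .bind b =>
      if unr b then Graph.zero B
      else ⟨1, fun _ => b, fun _ _ => False, fun _ _ h => h.elim⟩
  | .comma Γ₁ Γ₂ => (interpG unr Γ₁).join (interpG unr Γ₂)
  | .par Γ₁ Γ₂ => (interpG unr Γ₁).union (interpG unr Γ₂)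

/-- Set part of the interpretation of a context: the set of its
    unrestricted bindings. -/
def GCtx.unrSet {B : Type} (unr : B → Bool) : GCtx B → Set B
  | .empty => ∅
  | .bind b => if unr b then {b} else ∅
  | .comma Γ₁ Γ₂ => unrSet unr Γ₁ ∪ unrSet unr Γ₂
  | .par Γ₁ Γ₂ => unrSet unr Γ₁ ∪ unrSet unr Γ₂

/-! ## Syntactic equivalence of contexts: the least congruence generated by
    the monoid laws for `,`, the commutative monoid laws for `∥`, and the
    rules for unrestricted bindings. -/

inductive CtxEquiv {B : Type} (unr : B → Bool) : GCtx B → GCtx B → Prop where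
  | commaIdL : ∀ Γ : GCtx B, CtxEquiv unr (GCtx.comma GCtx.empty Γ) Γ
  | commaIdR : ∀ Γ : GCtx B, CtxEquiv unr (GCtx.comma Γ GCtx.empty) Γ
  | commaAssoc : ∀ Γ₁ Γ₂ Γ₃ : GCtx B,
      CtxEquiv unr (GCtx.comma Γ₁ (GCtx.comma Γ₂ Γ₃))
        (GCtx.comma (GCtx.comma Γ₁ Γ₂) Γ₃)
  | parId : ∀ Γ : GCtx B, CtxEquiv unr (GCtx.par GCtx.empty Γ) Γ
  | parComm : ∀ Γ₁ Γ₂ : GCtx B, CtxEquiv unr (GCtx.par Γ₁ Γ₂) (GCtx.par Γ₂ Γ₁)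
  | parAssoc : ∀ Γ₁ Γ₂ Γ₃ : GCtx B,
      CtxEquiv unr (GCtx.par Γ₁ (GCtx.par Γ₂ Γ₃)) (GCtx.par (GCtx.par Γ₁ Γ₂) Γ₃)
  | unrMove : ∀ (G : GPat B) (b : B), unr b = true →
      CtxEquiv unr (GPat.fill G (GCtx.bind b))
        (GCtx.par (GPat.fill G GCtx.empty) (GCtx.bind b))
  | unrDemote : ∀ b : B, unr b = true →
      CtxEquiv unr (GCtx.par (GCtx.bind b) (GCtx.bind b)) (GCtx.bind b)
  | congr : ∀ (G : GPat B) (Γ₁ Γ₂ : GCtx B), CtxEquiv unr Γ₁ Γ₂ →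
      CtxEquiv unr (GPat.fill G Γ₁) (GPat.fill G Γ₂)
  | refl : ∀ Γ : GCtx B, CtxEquiv unr Γ Γ
  | symm : ∀ Γ₁ Γ₂ : GCtx B, CtxEquiv unr Γ₂ Γ₁ → CtxEquiv unr Γ₁ Γ₂
  | trans : ∀ Γ₁ Γ₂ Γ₃ : GCtx B,
      CtxEquiv unr Γ₁ Γ₂ → CtxEquiv unr Γ₂ Γ₃ → CtxEquiv unr Γ₁ Γ₃

/-! ## Realization of a graph representation as a context (defined by
    recursion on the number of vertices, splitting at the minimum union cut
    or the minimum join cut). -/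

open Classical in
noncomputable def Graph.realize {B : Type} (G : Graph B) : Option (GCtx B) :=
  if G.n = 0 then some GCtx.empty
  else if G.n = 1 then some (GCtx.bind (G.label 0))
  else if hu : ∃ k, G.UnionCut k then
    (Graph.realize (G.cutLo (sInf {k | G.UnionCut k}))).bind fun Γ₁ =>
      (Graph.realize (G.cutHi (sInf {k | G.UnionCut k}))).map fun Γ₂ =>
        GCtx.par Γ₁ Γ₂
  else if hj : ∃ k, G.JoinCut k then
    (Graph.realize (G.cutLo (sInf {k | G.JoinCut k}))).bind fun Γ₁ =>
      (Graph.realize (G.cutHi (sInf {k | G.JoinCut k}))).map fun Γ₂ =>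
        GCtx.comma Γ₁ Γ₂
  else none
termination_by G.n
decreasing_by
  · have h := Nat.sInf_mem (s := {k | G.UnionCut k}) hu
    simp only [Set.mem_setOf_eq] at h
    obtain ⟨h1, h2, -⟩ := h
    simpa only [Graph.cutLo] using h2
  · have h := Nat.sInf_mem (s := {k | G.UnionCut k}) hu
    simp only [Set.mem_setOf_eq] at h
    obtain ⟨h1, h2, -⟩ := h
    simp only [Graph.cutHi]
    omega
  · have h := Nat.sInf_mem (s := {k | G.JoinCut k}) hj
    simp only [Set.mem_setOf_eq] at h
    obtain ⟨h1, h2, -⟩ := h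
    simpa only [Graph.cutLo] using h2
  · have h := Nat.sInf_mem (s := {k | G.JoinCut k}) hj
    simp only [Set.mem_setOf_eq] at h
    obtain ⟨h1, h2, -⟩ := h
    simp only [Graph.cutHi]
    omega

namespace Graph

variable {B : Type}

/-- Weak connectivity relation between two vertices. -/
def Conn (G : Graph B) : ℕ → ℕ → Prop :=
  Relation.ReflTransGen (fun a b => G.edge a b ∨ G.edge b a)

lemma conn_symm {G : Graph B} {i j : ℕ} (h : G.Conn i j) : G.Conn j i := by
  induction h with
  | refl => exact .refl
  | tail h1 h2 ih => exact Relation.ReflTransGen.trans (.single h2.symm) ih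

lemma conn_trans {G : Graph B} {i j l : ℕ} (h : G.Conn i j) (h' : G.Conn j l) : G.Conn i l :=
  Relation.ReflTransGen.trans h h'

/-- generic transport of connectivity along a vertex map with an invariant. -/
lemma conn_map {r s : ℕ → ℕ → Prop} {P : ℕ → Prop} (φ : ℕ → ℕ)
    (hstep : ∀ a b, P a → r a b → P b ∧ s (φ a) (φ b)) :
    ∀ {i j}, Relation.ReflTransGen r i j → P i →
      P j ∧ Relation.ReflTransGen s (φ i) (φ j) := by
  intro i j h
  induction h with
  | refl => exact fun hi => ⟨hi, .refl⟩
  | tail h1 h2 ih =>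
    intro hi
    obtain ⟨hb, hp⟩ := ih hi
    obtain ⟨hc, hs⟩ := hstep _ _ hb h2
    exact ⟨hc, hp.tail hs⟩

lemma conn_confine_lo {G : Graph B} {k : ℕ} (hu : G.UnionCut k) (ht : G.TopOrdered)
    {i j : ℕ} (h : G.Conn i j) (hi : i < k) : j < k ∧ (G.cutLo k).Conn i j := by
  refine conn_map (φ := id) (P := fun x => x < k) ?_ h hi
  intro a b ha hr
  rcases hr with e | e
  · have hb : b < k := by
      by_contra hb
      exact hu.2.2 a b ha (by omega) e
    exact ⟨hb, Or.inl ⟨e, ha, hb⟩⟩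
  · have hab : b < a := ht _ _ e
    have hb : b < k := by omega
    exact ⟨hb, Or.inr ⟨e, hb, ha⟩⟩

lemma conn_confine_hi {G : Graph B} {k : ℕ} (hu : G.UnionCut k) (ht : G.TopOrdered)
    {i j : ℕ} (h : G.Conn i j) (hi : k ≤ i) : k ≤ j ∧ (G.cutHi k).Conn (i - k) (j - k) := by
  refine conn_map (φ := fun x => x - k) (P := fun x => k ≤ x) ?_ h hi
  intro a b ha hr
  rcases hr with e | e
  · have hb : a < b := ht _ _ e
    refine ⟨by omega, Or.inl ?_⟩
    show G.edge (a - k + k) (b - k + k)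
    have h1 : a - k + k = a := by omega
    have h2 : b - k + k = b := by omega
    rw [h1, h2]; exact e
  · have hb : k ≤ b := by
      by_contra hb
      exact hu.2.2 b a (by omega) ha e
    refine ⟨hb, Or.inr ?_⟩
    show G.edge (b - k + k) (a - k + k)
    have h1 : a - k + k = a := by omega
    have h2 : b - k + k = b := by omega
    rw [h1, h2]; exact e

lemma conn_lift_lo {G : Graph B} {k : ℕ} {i j : ℕ} (h : (G.cutLo k).Conn i j) : G.Conn i j := by
  have := conn_map (φ := id) (P := fun _ => True)
    (r := fun a b => (G.cutLo k).edge a b ∨ (G.cutLo k).edge b a)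
    (s := fun a b => G.edge a b ∨ G.edge b a)
    (fun a b _ hr => ⟨trivial, by rcases hr with e | e
                                  · exact Or.inl e.1
                                  · exact Or.inr e.1⟩) h trivial
  exact this.2

lemma conn_lift_hi {G : Graph B} {k : ℕ} {i j : ℕ} (h : (G.cutHi k).Conn i j) :
    G.Conn (i + k) (j + k) := by
  have := conn_map (φ := fun x => x + k) (P := fun _ => True)
    (r := fun a b => (G.cutHi k).edge a b ∨ (G.cutHi k).edge b a)
    (s := fun a b => G.edge a b ∨ G.edge b a)
    (fun a b _ hr => ⟨trivial, hr⟩) h trivial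
  exact this.2

lemma conn_of_joinCut {G : Graph B} {k : ℕ} (hk : G.JoinCut k) :
    ∀ i j, i < G.n → j < G.n → G.Conn i j := by
  obtain ⟨hk0, hkn, hall⟩ := hk
  have base : ∀ x, x < G.n → G.Conn x 0 := by
    intro x hx
    by_cases hxk : x < k
    · refine Relation.ReflTransGen.trans (Relation.ReflTransGen.single
        (Or.inl (hall x (G.n - 1) hxk (by omega) (by omega)))) ?_
      exact Relation.ReflTransGen.single (Or.inr (hall 0 (G.n - 1) hk0 (by omega) (by omega)))
    · exact Relation.ReflTransGen.single (Or.inr (hall 0 x hk0 (by omega) hx))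
  intro i j hi hj
  exact conn_trans (base i hi) (conn_symm (base j hj))

/-- Pointwise graph equality (up to out-of-range labels). -/
structure EquivG (G H : Graph B) : Prop where
  hn : G.n = H.n
  hlabel : ∀ i, i < G.n → G.label i = H.label i
  hedge : ∀ i j, G.edge i j ↔ H.edge i j

lemma EquivG.unionCut_iff {G H : Graph B} (e : EquivG G H) (k : ℕ) :
    G.UnionCut k ↔ H.UnionCut k := by
  unfold UnionCut
  rw [e.hn]
  constructor <;> rintro ⟨h1, h2, h3⟩ <;> refine ⟨h1, h2, fun i j hi hj hh => ?_⟩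
  · exact h3 i j hi hj ((e.hedge i j).mpr hh)
  · exact h3 i j hi hj ((e.hedge i j).mp hh)

lemma EquivG.joinCut_iff {G H : Graph B} (e : EquivG G H) (k : ℕ) :
    G.JoinCut k ↔ H.JoinCut k := by
  unfold JoinCut
  rw [e.hn]
  constructor <;> rintro ⟨h1, h2, h3⟩ <;> refine ⟨h1, h2, fun i j hi hj hjn => ?_⟩
  · rw [← e.hedge]; exact h3 i j hi hj hjn
  · rw [e.hedge]; exact h3 i j hi hj hjn

lemma EquivG.cutLo {G H : Graph B} (e : EquivG G H) (k : ℕ) (hk : k ≤ G.n) :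
    EquivG (G.cutLo k) (H.cutLo k) := by
  refine ⟨rfl, fun i hi => e.hlabel i (by simp only [Graph.cutLo] at hi; omega), fun i j => ?_⟩
  simp only [Graph.cutLo]
  rw [e.hedge]

lemma EquivG.cutHi {G H : Graph B} (e : EquivG G H) (k : ℕ) :
    EquivG (G.cutHi k) (H.cutHi k) := by
  have hn := e.hn
  refine ⟨by simp only [Graph.cutHi]; omega, fun i hi => ?_, fun i j => ?_⟩
  · simp only [Graph.cutHi] at hi ⊢
    exact e.hlabel _ (by omega)
  · simp only [Graph.cutHi]
    rw [e.hedge]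

open Classical in
lemma realize_eq (G : Graph B) : G.realize =
    (if G.n = 0 then some GCtx.empty
    else if G.n = 1 then some (GCtx.bind (G.label 0))
    else if hu : ∃ k, G.UnionCut k then
      (Graph.realize (G.cutLo (sInf {k | G.UnionCut k}))).bind fun Γ₁ =>
        (Graph.realize (G.cutHi (sInf {k | G.UnionCut k}))).map fun Γ₂ =>
          GCtx.par Γ₁ Γ₂
    else if hj : ∃ k, G.JoinCut k then
      (Graph.realize (G.cutLo (sInf {k | G.JoinCut k}))).bind fun Γ₁ =>
        (Graph.realize (G.cutHi (sInf {k | G.JoinCut k}))).map fun Γ₂ =>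
          GCtx.comma Γ₁ Γ₂
    else none) := by
  rw [Graph.realize]

lemma realize_zero {G : Graph B} (h : G.n = 0) : G.realize = some GCtx.empty := by
  rw [realize_eq, if_pos h]

lemma realize_one {G : Graph B} (h : G.n = 1) :
    G.realize = some (GCtx.bind (G.label 0)) := by
  rw [realize_eq, if_neg (by omega), if_pos h]

lemma realize_congr : ∀ (n : ℕ) (G H : Graph B), G.n = n → EquivG G H →
    G.realize = H.realize := by
  intro n
  induction n using Nat.strong_induction_on with
  | _ n ih =>
  intro G H hGn e
  have hn := e.hn
  have hU : ∀ k, H.UnionCut k ↔ G.UnionCut k := fun k => (e.unionCut_iff k).symm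
  have hJ : ∀ k, H.JoinCut k ↔ G.JoinCut k := fun k => (e.joinCut_iff k).symm
  by_cases h0 : G.n = 0
  · rw [realize_zero h0, realize_zero (by omega : H.n = 0)]
  by_cases h1 : G.n = 1
  · rw [realize_one h1, realize_one (by omega : H.n = 1), e.hlabel 0 (by omega)]
  have hUset : {k | G.UnionCut k} = {k | H.UnionCut k} := by
    ext k; exact (hU k).symm
  have hJset : {k | G.JoinCut k} = {k | H.JoinCut k} := by
    ext k; exact (hJ k).symm
  rw [realize_eq G, realize_eq H, if_neg h0, if_neg (show ¬ H.n = 0 by omega),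
    if_neg h1, if_neg (show ¬ H.n = 1 by omega)]
  by_cases hu : ∃ k, G.UnionCut k
  · have huH : ∃ k, H.UnionCut k := by obtain ⟨k, hk⟩ := hu; exact ⟨k, (hU k).mpr hk⟩
    have hmem := Nat.sInf_mem hu
    set k₀ := sInf {k | G.UnionCut k} with hk₀def
    have hk₀ : G.UnionCut k₀ := hmem
    have hk₀n : k₀ < G.n := hk₀.2.1
    have hk₀0 : 0 < k₀ := hk₀.1
    have hlo := ih k₀ (by omega) (G.cutLo k₀) (H.cutLo k₀) rfl (e.cutLo k₀ (by omega))
    have hhi := ih (G.n - k₀) (by omega) (G.cutHi k₀) (H.cutHi k₀) rfl (e.cutHi k₀)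
    rw [dif_pos hu, dif_pos huH, ← hUset, ← hk₀def, hlo, hhi]
  · have huH : ¬ ∃ k, H.UnionCut k := by
      rintro ⟨k, hk⟩; exact hu ⟨k, (hU k).mp hk⟩
    rw [dif_neg hu, dif_neg huH]
    by_cases hj : ∃ k, G.JoinCut k
    · have hjH : ∃ k, H.JoinCut k := by obtain ⟨k, hk⟩ := hj; exact ⟨k, (hJ k).mpr hk⟩
      have hmem := Nat.sInf_mem hj
      set k₀ := sInf {k | G.JoinCut k} with hk₀def
      have hk₀ : G.JoinCut k₀ := hmem
      have hk₀n : k₀ < G.n := hk₀.2.1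
      have hk₀0 : 0 < k₀ := hk₀.1
      have hlo := ih k₀ (by omega) (G.cutLo k₀) (H.cutLo k₀) rfl (e.cutLo k₀ (by omega))
      have hhi := ih (G.n - k₀) (by omega) (G.cutHi k₀) (H.cutHi k₀) rfl (e.cutHi k₀)
      rw [dif_pos hj, dif_pos hjH, ← hJset, ← hk₀def, hlo, hhi]
    · have hjH : ¬ ∃ k, H.JoinCut k := by
        rintro ⟨k, hk⟩; exact hj ⟨k, (hJ k).mp hk⟩
      rw [dif_neg hj, dif_neg hjH]

lemma realize_elim_union {G : Graph B} {Δ : GCtx B} (h2 : 2 ≤ G.n)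
    (hu : ∃ k, G.UnionCut k) (h : G.realize = some Δ) :
    ∃ Δa Δb, (G.cutLo (sInf {k | G.UnionCut k})).realize = some Δa ∧
      (G.cutHi (sInf {k | G.UnionCut k})).realize = some Δb ∧ Δ = .par Δa Δb := by
  rw [realize_eq, if_neg (by omega), if_neg (by omega), dif_pos hu] at h
  rcases Option.bind_eq_some_iff.mp h with ⟨Δa, ha, h'⟩
  rcases Option.map_eq_some_iff.mp h' with ⟨Δb, hb, rfl⟩
  exact ⟨Δa, Δb, ha, hb, rfl⟩

lemma realize_elim_join {G : Graph B} {Δ : GCtx B} (h2 : 2 ≤ G.n)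
    (hnu : ¬ ∃ k, G.UnionCut k) (h : G.realize = some Δ) :
    (∃ k, G.JoinCut k) ∧ ∃ Δa Δb, (G.cutLo (sInf {k | G.JoinCut k})).realize = some Δa ∧
      (G.cutHi (sInf {k | G.JoinCut k})).realize = some Δb ∧ Δ = .comma Δa Δb := by
  rw [realize_eq, if_neg (by omega), if_neg (by omega), dif_neg hnu] at h
  by_cases hj : ∃ k, G.JoinCut k
  · rw [dif_pos hj] at h
    rcases Option.bind_eq_some_iff.mp h with ⟨Δa, ha, h'⟩
    rcases Option.map_eq_some_iff.mp h' with ⟨Δb, hb, rfl⟩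
    exact ⟨hj, Δa, Δb, ha, hb, rfl⟩
  · rw [dif_neg hj] at h; exact absurd h (by simp)

lemma topOrdered_cutLo {G : Graph B} (ht : G.TopOrdered) (k : ℕ) :
    (G.cutLo k).TopOrdered := fun i j h => ht i j h.1

lemma topOrdered_cutHi {G : Graph B} (ht : G.TopOrdered) (k : ℕ) :
    (G.cutHi k).TopOrdered := by
  intro i j h
  have := ht _ _ h
  omega

lemma min_cutLo_no_unionCut {G : Graph B} (hu : ∃ k, G.UnionCut k) :
    ¬ ∃ k', (G.cutLo (sInf {k | G.UnionCut k})).UnionCut k' := by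
  set k₀ := sInf {k | G.UnionCut k} with hdef
  have hk₀ : G.UnionCut k₀ := Nat.sInf_mem hu
  have hk₀n : k₀ < G.n := hk₀.2.1
  rintro ⟨k', h0, h1, hcut⟩
  simp only [Graph.cutLo] at h1
  have hcut' : G.UnionCut k' := by
    refine ⟨h0, by omega, fun i j hi hj => ?_⟩
    intro e
    by_cases hjk : j < k₀
    · exact hcut i j hi hj ⟨e, by omega, hjk⟩
    · exact hk₀.2.2 i j (by omega) (by omega) e
  have := Nat.sInf_le (show k' ∈ {k | G.UnionCut k} from hcut')
  omega

lemma connected_of_no_unionCut {G : Graph B} {Δ : GCtx B} (h : G.realize = some Δ)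
    (hnu : ¬ ∃ k, G.UnionCut k) : ∀ i j, i < G.n → j < G.n → G.Conn i j := by
  intro i j hi hj
  by_cases h2 : 2 ≤ G.n
  · obtain ⟨⟨k, hk⟩, -⟩ := realize_elim_join h2 hnu h
    exact conn_of_joinCut hk i j hi hj
  · have : i = j := by omega
    subst this; exact .refl

end Graph

namespace Graph
variable {B : Type}

lemma classes_interval : ∀ (n : ℕ) (G : Graph B), G.n = n → G.TopOrdered →
    ∀ Δ, G.realize = some Δ → ∀ i, i < G.n →
    ∃ a b, a ≤ i ∧ i < b ∧ b ≤ G.n ∧ ∀ j, j < G.n → (G.Conn i j ↔ (a ≤ j ∧ j < b)) := by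
  intro n
  induction n using Nat.strong_induction_on with
  | _ n ih =>
  intro G hGn ht Δ hr i hi
  by_cases h2 : 2 ≤ G.n
  case neg =>
    refine ⟨0, G.n, by omega, hi, le_refl _, fun j hj => ?_⟩
    have : i = j := by omega
    subst this
    exact ⟨fun _ => ⟨by omega, hj⟩, fun _ => .refl⟩
  case pos =>
  by_cases hu : ∃ k, G.UnionCut k
  · obtain ⟨Δa, Δb, ha, hb, rfl⟩ := realize_elim_union h2 hu hr
    set k₀ := sInf {k | G.UnionCut k} with hk₀def
    have hk₀ : G.UnionCut k₀ := Nat.sInf_mem hu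
    have hk₀n : k₀ < G.n := hk₀.2.1
    have hk₀0 : 0 < k₀ := hk₀.1
    by_cases hik : i < k₀
    · refine ⟨0, k₀, by omega, hik, by omega, fun j hj => ?_⟩
      constructor
      · intro hc; exact ⟨by omega, (conn_confine_lo hk₀ ht hc hik).1⟩
      · rintro ⟨-, hjk⟩
        exact conn_lift_lo (connected_of_no_unionCut ha (min_cutLo_no_unionCut hu) i j
          (show i < k₀ from hik) (show j < k₀ from hjk))
    · obtain ⟨a, b, hai, hib, hbn, hcls⟩ := ih (G.n - k₀) (by omega) (G.cutHi k₀) rfl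
        (topOrdered_cutHi ht k₀) Δb hb (i - k₀) (show i - k₀ < G.n - k₀ by omega)
      have hbn' : b ≤ G.n - k₀ := hbn
      refine ⟨a + k₀, b + k₀, by omega, by omega, by omega, fun j hj => ?_⟩
      constructor
      · intro hc
        obtain ⟨hjk, hc'⟩ := conn_confine_hi hk₀ ht hc (by omega)
        have := (hcls (j - k₀) (show j - k₀ < G.n - k₀ by omega)).mp hc'
        omega
      · rintro ⟨haj, hjb⟩
        have hc := (hcls (j - k₀) (show j - k₀ < G.n - k₀ by omega)).mpr ⟨by omega, by omega⟩
        have h2' := conn_lift_hi hc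
        rw [show i - k₀ + k₀ = i by omega, show j - k₀ + k₀ = j by omega] at h2'
        exact h2'
  · refine ⟨0, G.n, by omega, hi, le_refl _, fun j hj => ?_⟩
    exact ⟨fun _ => ⟨by omega, hj⟩, fun _ => connected_of_no_unionCut hr hu i j hi hj⟩

/-- Induced subgraph on an index interval `[a, b)`. -/
def slice (G : Graph B) (a b : ℕ) : Graph B where
  n := b - a
  label := fun i => G.label (i + a)
  edge := fun i j => G.edge (i + a) (j + a) ∧ i + a < b ∧ j + a < b
  edge_lt := by intro i j h; omega

/-- Graph obtained by deleting the index interval `[a, b)`. -/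
def del (G : Graph B) (a b : ℕ) : Graph B where
  n := G.n - (b - a)
  label := fun i => if i < a then G.label i else G.label (i + (b - a))
  edge := fun i j => i < G.n - (b - a) ∧ j < G.n - (b - a) ∧
    G.edge (if i < a then i else i + (b - a)) (if j < a then j else j + (b - a))
  edge_lt := fun i j h => ⟨h.1, h.2.1⟩

lemma topOrdered_slice {G : Graph B} (ht : G.TopOrdered) (a b : ℕ) :
    (G.slice a b).TopOrdered := by
  intro i j h
  have := ht _ _ h.1
  omega

lemma topOrdered_del {G : Graph B} (ht : G.TopOrdered) (a b : ℕ) :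
    (G.del a b).TopOrdered := by
  intro i j h
  have := ht _ _ h.2.2
  split_ifs at this <;> omega

end Graph

section CtxHelpers
variable {B : Type} (unr : B → Bool)

lemma ctx_par_congr {A A' C C' : GCtx B} (h1 : CtxEquiv unr A A') (h2 : CtxEquiv unr C C') :
    CtxEquiv unr (.par A C) (.par A' C') := by
  refine CtxEquiv.trans _ (.par A' C) _ ?_ ?_
  · exact CtxEquiv.congr (GPat.parL .hole C) A A' h1
  · exact CtxEquiv.congr (GPat.parR A' .hole) C C' h2

lemma ctx_comma_congr {A A' C C' : GCtx B} (h1 : CtxEquiv unr A A') (h2 : CtxEquiv unr C C') :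
    CtxEquiv unr (.comma A C) (.comma A' C') := by
  refine CtxEquiv.trans _ (.comma A' C) _ ?_ ?_
  · exact CtxEquiv.congr (GPat.commaL .hole C) A A' h1
  · exact CtxEquiv.congr (GPat.commaR A' .hole) C C' h2

lemma ctx_par_left_comm (A C D : GCtx B) :
    CtxEquiv unr (.par A (.par C D)) (.par C (.par A D)) := by
  refine CtxEquiv.trans _ (.par (.par A C) D) _ (CtxEquiv.parAssoc A C D) ?_
  refine CtxEquiv.trans _ (.par (.par C A) D) _ ?_ ?_
  · exact CtxEquiv.congr (GPat.parL .hole D) _ _ (CtxEquiv.parComm A C)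
  · exact CtxEquiv.symm _ _ (CtxEquiv.parAssoc C A D)

end CtxHelpers

namespace Graph
variable {B : Type}

lemma peel (unr : B → Bool) : ∀ (n : ℕ) (G : Graph B), G.n = n → G.TopOrdered →
    ∀ Δ, G.realize = some Δ → ∀ a b, a < b → b - a < G.n → b ≤ G.n →
    (∀ j, j < G.n → (G.Conn a j ↔ (a ≤ j ∧ j < b))) →
    ∃ D₁ D₂, (G.slice a b).realize = some D₁ ∧ (G.del a b).realize = some D₂ ∧
      CtxEquiv unr Δ (.par D₁ D₂) := by
  intro n
  induction n using Nat.strong_induction_on with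
  | _ n ih =>
  intro G hGn ht Δ hr a b hab hprop hbn hcls
  have h2 : 2 ≤ G.n := by omega
  have hu : ∃ k, G.UnionCut k := by
    by_contra hnu
    have hconn := connected_of_no_unionCut hr hnu
    by_cases ha0 : 0 < a
    · have := (hcls 0 (by omega)).mp (conn_symm (hconn 0 a (by omega) (by omega)))
      omega
    · have hb : b < G.n := by omega
      have := (hcls b hb).mp (hconn a b (by omega) hb)
      omega
  obtain ⟨Δa, Δb, hΔa, hΔb, rfl⟩ := realize_elim_union h2 hu hr
  set k₀ := sInf {k | G.UnionCut k} with hk₀def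
  have hk₀ : G.UnionCut k₀ := Nat.sInf_mem hu
  have hk₀n : k₀ < G.n := hk₀.2.1
  have hk₀0 : 0 < k₀ := hk₀.1
  have hLoConn : ∀ x y, x < k₀ → y < k₀ → G.Conn x y := fun x y hx hy =>
    conn_lift_lo (connected_of_no_unionCut hΔa (min_cutLo_no_unionCut hu) x y hx hy)
  by_cases hak : a < k₀
  · -- the class of `a` is exactly the lower part
    have hbk : b = k₀ := by
      have h1 : b - 1 < k₀ := (conn_confine_lo hk₀ ht
        ((hcls (b-1) (by omega)).mpr ⟨by omega, by omega⟩) hak).1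
      have h2' : k₀ - 1 < b := ((hcls (k₀-1) (by omega)).mp
        (hLoConn a (k₀-1) hak (by omega))).2
      omega
    have ha0 : a = 0 := by
      have := ((hcls 0 (by omega)).mp (hLoConn a 0 hak (by omega))).1
      omega
    subst hbk; subst ha0
    have e1 : EquivG (G.slice 0 k₀) (G.cutLo k₀) := by
      refine ⟨rfl, fun i hi => rfl, fun i j => ?_⟩
      show (G.edge (i+0) (j+0) ∧ i+0 < k₀ ∧ j+0 < k₀) ↔ (G.edge i j ∧ i < k₀ ∧ j < k₀)
      simp
    have e2 : EquivG (G.del 0 k₀) (G.cutHi k₀) := by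
      refine ⟨rfl, fun i hi => ?_, fun i j => ?_⟩
      · show (if i < 0 then G.label i else G.label (i + (k₀ - 0))) = G.label (i + k₀)
        rw [if_neg (by omega)]
        congr 1
      · show (i < G.n - (k₀-0) ∧ j < G.n - (k₀-0) ∧
          G.edge (if i < 0 then i else i + (k₀-0)) (if j < 0 then j else j + (k₀-0)))
          ↔ G.edge (i + k₀) (j + k₀)
        rw [if_neg (by omega : ¬ i < 0), if_neg (by omega : ¬ j < 0)]
        constructor
        · rintro ⟨-, -, e⟩; exact e
        · intro e
          have := G.edge_lt _ _ e
          exact ⟨by omega, by omega, e⟩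
    refine ⟨Δa, Δb, ?_, ?_, CtxEquiv.refl _⟩
    · rw [realize_congr _ _ _ rfl e1]; exact hΔa
    · rw [realize_congr _ _ _ rfl e2]; exact hΔb
  · have hka : k₀ ≤ a := by omega
    by_cases hfull : b - a = G.n - k₀
    · have haek : a = k₀ := by omega
      have hben : b = G.n := by omega
      subst haek; subst hben
      have e1 : EquivG (G.slice k₀ G.n) (G.cutHi k₀) := by
        refine ⟨rfl, fun i hi => rfl, fun i j => ?_⟩
        show (G.edge (i+k₀) (j+k₀) ∧ i+k₀ < G.n ∧ j+k₀ < G.n) ↔ G.edge (i+k₀) (j+k₀)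
        constructor
        · rintro ⟨e, -, -⟩; exact e
        · intro e; have := G.edge_lt _ _ e; exact ⟨e, by omega, by omega⟩
      have e2 : EquivG (G.del k₀ G.n) (G.cutLo k₀) := by
        refine ⟨show G.n - (G.n - k₀) = k₀ by omega, fun i hi => ?_, fun i j => ?_⟩
        · have hi' : i < G.n - (G.n - k₀) := hi
          show (if i < k₀ then G.label i else _) = G.label i
          rw [if_pos (by omega)]
        · show (i < G.n - (G.n - k₀) ∧ j < G.n - (G.n - k₀) ∧
            G.edge (if i < k₀ then i else _) (if j < k₀ then j else _))
            ↔ (G.edge i j ∧ i < k₀ ∧ j < k₀)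
          constructor
          · rintro ⟨h1', h2', e⟩
            rw [if_pos (by omega), if_pos (by omega)] at e
            exact ⟨e, by omega, by omega⟩
          · rintro ⟨e, h1', h2'⟩
            refine ⟨by omega, by omega, ?_⟩
            rw [if_pos h1', if_pos h2']
            exact e
      refine ⟨Δb, Δa, ?_, ?_, CtxEquiv.parComm Δa Δb⟩
      · rw [realize_congr _ _ _ rfl e1]; exact hΔb
      · rw [realize_congr _ _ _ rfl e2]; exact hΔa
    · -- the class lies strictly inside the upper part: recurse
      have hstrict : b - a < G.n - k₀ := by omega
      have hclsHi : ∀ j, j < (G.cutHi k₀).n →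
          ((G.cutHi k₀).Conn (a - k₀) j ↔ (a - k₀ ≤ j ∧ j < b - k₀)) := by
        intro j hj
        have hj' : j < G.n - k₀ := hj
        constructor
        · intro hc
          have h' := conn_lift_hi hc
          rw [show a - k₀ + k₀ = a by omega] at h'
          have := (hcls (j + k₀) (by omega)).mp h'
          omega
        · intro hbnd
          have hc := (hcls (j + k₀) (by omega)).mpr ⟨by omega, by omega⟩
          have h' := (conn_confine_hi hk₀ ht hc hka).2
          rwa [show j + k₀ - k₀ = j by omega] at h'
      obtain ⟨D₁, D₂h, hD₁, hD₂h, hEq⟩ := ih (G.n - k₀) (by omega) (G.cutHi k₀) rfl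
        (topOrdered_cutHi ht k₀) Δb hΔb (a - k₀) (b - k₀) (by omega)
        (show (b - k₀) - (a - k₀) < G.n - k₀ by omega)
        (show b - k₀ ≤ G.n - k₀ by omega) hclsHi
      -- slice transfer
      have eS : EquivG (G.slice a b) ((G.cutHi k₀).slice (a - k₀) (b - k₀)) := by
        refine ⟨show b - a = (b - k₀) - (a - k₀) by omega, fun i hi => ?_, fun i j => ?_⟩
        · show G.label (i + a) = G.label (i + (a - k₀) + k₀)
          congr 1; omega
        · show (G.edge (i + a) (j + a) ∧ i + a < b ∧ j + a < b) ↔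
            (G.edge (i + (a - k₀) + k₀) (j + (a - k₀) + k₀) ∧
              i + (a - k₀) < b - k₀ ∧ j + (a - k₀) < b - k₀)
          rw [show i + (a - k₀) + k₀ = i + a by omega,
            show j + (a - k₀) + k₀ = j + a by omega]
          constructor
          · rintro ⟨e, h1', h2'⟩; exact ⟨e, by omega, by omega⟩
          · rintro ⟨e, h1', h2'⟩; exact ⟨e, by omega, by omega⟩
      -- the deleted graph
      set D := G.del a b with hDdef
      have hDn : D.n = G.n - (b - a) := rfl
      have h2D : 2 ≤ D.n := by rw [hDn]; omega
      have hedgeD : ∀ i j, D.edge i j ↔ (i < G.n - (b - a) ∧ j < G.n - (b - a) ∧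
          G.edge (if i < a then i else i + (b - a)) (if j < a then j else j + (b - a))) :=
        fun i j => Iff.rfl
      have hcutD : D.UnionCut k₀ := by
        refine ⟨hk₀0, show k₀ < G.n - (b - a) by rw [← hDn]; rw [hDn]; omega,
          fun i j hi hj => ?_⟩
        rw [hedgeD]
        rintro ⟨hi', hj', e⟩
        rw [if_pos (show i < a by omega)] at e
        by_cases hja : j < a
        · rw [if_pos hja] at e
          exact hk₀.2.2 i j (by omega) (by omega) e
        · rw [if_neg hja] at e
          exact hk₀.2.2 i (j + (b - a)) (by omega) (by omega) e
      have hminD : sInf {k | D.UnionCut k} = k₀ := by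
        refine le_antisymm (Nat.sInf_le hcutD) ?_
        by_contra hlt
        push_neg at hlt
        set k' := sInf {k | D.UnionCut k} with hk'def
        have hk' : D.UnionCut k' := Nat.sInf_mem ⟨k₀, show k₀ ∈ {k | D.UnionCut k} from hcutD⟩
        have hk'0 : 0 < k' := hk'.1
        have hGk' : G.UnionCut k' := by
          refine ⟨hk'0, by omega, fun i j hi hj => ?_⟩
          intro e
          have hjn : j < G.n := (G.edge_lt _ _ e).2
          by_cases hjb : j < a
          · refine hk'.2.2 i j hi hj ?_
            rw [hedgeD]
            refine ⟨by omega, by omega, ?_⟩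
            rw [if_pos (by omega), if_pos hjb]
            exact e
          · by_cases hjb2 : j < b
            · have hc : G.Conn a j := (hcls j hjn).mpr ⟨by omega, hjb2⟩
              have hc2 : G.Conn a i := conn_trans hc
                (conn_symm (Relation.ReflTransGen.single (Or.inl e)))
              have := ((hcls i (by omega)).mp hc2).1
              omega
            · refine hk'.2.2 i (j - (b - a)) hi (by omega) ?_
              rw [hedgeD]
              refine ⟨by omega, by omega, ?_⟩
              rw [if_pos (by omega), if_neg (show ¬ j - (b - a) < a by omega),
                show j - (b - a) + (b - a) = j by omega]
              exact e
        have := Nat.sInf_le (show k' ∈ {k | G.UnionCut k} from hGk')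
        omega
      have eLo : EquivG (D.cutLo k₀) (G.cutLo k₀) := by
        refine ⟨rfl, fun i hi => ?_, fun i j => ?_⟩
        · have hi' : i < k₀ := hi
          show (if i < a then G.label i else _) = G.label i
          rw [if_pos (by omega)]
        · show (D.edge i j ∧ i < k₀ ∧ j < k₀) ↔ (G.edge i j ∧ i < k₀ ∧ j < k₀)
          rw [hedgeD]
          constructor
          · rintro ⟨⟨-, -, e⟩, hik, hjk⟩
            rw [if_pos (by omega), if_pos (by omega)] at e
            exact ⟨e, hik, hjk⟩
          · rintro ⟨e, hik, hjk⟩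
            refine ⟨⟨by omega, by omega, ?_⟩, hik, hjk⟩
            rw [if_pos (by omega), if_pos (by omega)]
            exact e
      have eHi : EquivG (D.cutHi k₀) ((G.cutHi k₀).del (a - k₀) (b - k₀)) := by
        have hba : (b - k₀) - (a - k₀) = b - a := by omega
        refine ⟨?_, fun i hi => ?_, fun i j => ?_⟩
        · show D.n - k₀ = (G.n - k₀) - ((b - k₀) - (a - k₀))
          rw [hDn, hba]; omega
        · have hi' : i < D.n - k₀ := hi
          rw [hDn] at hi'
          show (if i + k₀ < a then G.label (i + k₀) else G.label (i + k₀ + (b - a))) =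
            (if i < a - k₀ then (G.cutHi k₀).label i
              else (G.cutHi k₀).label (i + ((b - k₀) - (a - k₀))))
          by_cases hia : i + k₀ < a
          · rw [if_pos hia, if_pos (by omega)]
            rfl
          · rw [if_neg hia, if_neg (by omega)]
            show G.label (i + k₀ + (b - a)) = G.label (i + ((b - k₀) - (a - k₀)) + k₀)
            congr 1; omega
        · show (i + k₀ < G.n - (b - a) ∧ j + k₀ < G.n - (b - a) ∧
            G.edge (if i + k₀ < a then i + k₀ else i + k₀ + (b - a))
              (if j + k₀ < a then j + k₀ else j + k₀ + (b - a))) ↔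
            (i < (G.n - k₀) - ((b - k₀) - (a - k₀)) ∧ j < (G.n - k₀) - ((b - k₀) - (a - k₀)) ∧
              (G.cutHi k₀).edge (if i < a - k₀ then i else i + ((b - k₀) - (a - k₀)))
                (if j < a - k₀ then j else j + ((b - k₀) - (a - k₀))))
          have harg : ∀ x : ℕ, (if x + k₀ < a then x + k₀ else x + k₀ + (b - a)) =
              (if x < a - k₀ then x else x + ((b - k₀) - (a - k₀))) + k₀ := by
            intro x; split_ifs <;> omega
          have hce : ∀ p q : ℕ, (G.cutHi k₀).edge p q = G.edge (p + k₀) (q + k₀) :=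
            fun p q => rfl
          rw [hce, ← harg i, ← harg j]
          constructor
          · rintro ⟨h1', h2', e⟩; exact ⟨by omega, by omega, e⟩
          · rintro ⟨h1', h2', e⟩; exact ⟨by omega, by omega, e⟩
      refine ⟨D₁, .par Δa D₂h, ?_, ?_, ?_⟩
      · rw [realize_congr _ _ _ rfl eS]; exact hD₁
      · rw [realize_eq D, if_neg (by omega), if_neg (by omega),
          dif_pos ⟨k₀, hcutD⟩, hminD, realize_congr _ _ _ rfl eLo,
          realize_congr _ _ _ rfl eHi, hΔa, hD₂h]
        rfl
      · refine CtxEquiv.trans _ (.par Δa (.par D₁ D₂h)) _ ?_ ?_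
        · exact ctx_par_congr unr (CtxEquiv.refl Δa) hEq
        · exact ctx_par_left_comm unr Δa D₁ D₂h
end Graph

namespace Graph
variable {B : Type}

lemma conn_transport_nat {G₁ G₂ : Graph B} (hn : G₁.n = G₂.n) (fv : ℕ → ℕ)
    (he : ∀ x y, x < G₂.n → y < G₂.n → (G₁.edge (fv x) (fv y) ↔ G₂.edge x y)) :
    ∀ x y, x < G₂.n → G₂.Conn x y → G₁.Conn (fv x) (fv y) := by
  intro x y hx h
  have hstep : ∀ p q, p < G₂.n → (G₂.edge p q ∨ G₂.edge q p) →
      q < G₂.n ∧ (G₁.edge (fv p) (fv q) ∨ G₁.edge (fv q) (fv p)) := by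
    intro p q hp hr
    have hq : q < G₂.n := by
      rcases hr with e | e
      · exact (G₂.edge_lt _ _ e).2
      · exact (G₂.edge_lt _ _ e).1
    refine ⟨hq, ?_⟩
    rcases hr with e | e
    · exact Or.inl ((he p q hp hq).mpr e)
    · exact Or.inr ((he q p hq hp).mpr e)
  exact (conn_map (s := fun p q => G₁.edge p q ∨ G₁.edge q p)
    (P := fun z => z < G₂.n) fv hstep h hx).2

lemma joinCut_transport {G₁ G₂ : Graph B} (hn : G₁.n = G₂.n) (ht₁ : G₁.TopOrdered)
    (fv gv : ℕ → ℕ)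
    (hfv : ∀ x, x < G₂.n → fv x < G₁.n) (hgv : ∀ x, x < G₁.n → gv x < G₂.n)
    (hgf : ∀ x, x < G₂.n → gv (fv x) = x) (hfg : ∀ x, x < G₁.n → fv (gv x) = x)
    (hef : ∀ x y, x < G₂.n → y < G₂.n → (G₁.edge (fv x) (fv y) ↔ G₂.edge x y))
    {k : ℕ} (hk : G₂.JoinCut k) :
    G₁.JoinCut k ∧ ∀ x, x < G₂.n → (x < k ↔ fv x < k) := by
  obtain ⟨hk0, hkn, hall⟩ := hk
  set L := Finset.range k with hL
  set N := Finset.range G₁.n with hN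
  set S := L.image fv with hS
  have hinj : Set.InjOn fv ↑L := by
    intro x hx y hy hxy
    simp only [hL, Finset.coe_range, Set.mem_Iio] at hx hy
    have h1 := hgf x (by omega)
    have h2 := hgf y (by omega)
    rw [hxy] at h1
    omega
  have hcS : S.card = k := by
    rw [hS, Finset.card_image_of_injOn hinj, hL, Finset.card_range]
  have hSN : S ⊆ N := by
    intro s hs
    obtain ⟨x, hx, rfl⟩ := Finset.mem_image.mp hs
    rw [hL, Finset.mem_range] at hx
    rw [hN, Finset.mem_range]
    exact hfv x (by omega)
  have hSout : ∀ s ∈ S, ∀ t ∈ N \ S, s < t := by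
    intro s hs t ht
    obtain ⟨x, hx, rfl⟩ := Finset.mem_image.mp hs
    rw [hL, Finset.mem_range] at hx
    rw [Finset.mem_sdiff, hN, Finset.mem_range] at ht
    obtain ⟨htn, hts⟩ := ht
    have hgt : gv t < G₂.n := hgv t htn
    have hgtk : ¬ gv t < k := by
      intro hgtk
      exact hts (Finset.mem_image.mpr ⟨gv t, by rw [hL, Finset.mem_range]; exact hgtk,
        hfg t htn⟩)
    have he2 : G₂.edge x (gv t) := hall x (gv t) hx (by omega) hgt
    have := (hef x (gv t) (by omega) hgt).mpr he2
    rw [hfg t htn] at this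
    exact ht₁ _ _ this
  have hSsubL : S ⊆ L := by
    intro s hs
    rw [hL, Finset.mem_range]
    have hsn : s < G₁.n := by
      have := hSN hs
      rwa [hN, Finset.mem_range] at this
    have hsub : N \ S ⊆ Finset.Ioo s G₁.n := by
      intro t ht
      rw [Finset.mem_Ioo]
      have htn : t < G₁.n := by
        have := (Finset.mem_sdiff.mp ht).1
        rwa [hN, Finset.mem_range] at this
      exact ⟨hSout s hs t ht, htn⟩
    have hc1 : (N \ S).card = G₁.n - k := by
      rw [Finset.card_sdiff_of_subset hSN, hcS, hN, Finset.card_range]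
    have := Finset.card_le_card hsub
    rw [hc1, Nat.card_Ioo] at this
    omega
  have hSL : S = L := Finset.eq_of_subset_of_card_le hSsubL
    (by rw [hcS, hL, Finset.card_range])
  have hfwd : ∀ x, x < G₂.n → (x < k ↔ fv x < k) := by
    intro x hx
    constructor
    · intro hxk
      have : fv x ∈ S := Finset.mem_image.mpr ⟨x, by rw [hL, Finset.mem_range]; exact hxk, rfl⟩
      rw [hSL, hL, Finset.mem_range] at this
      exact this
    · intro hfxk
      have : fv x ∈ L := by rw [hL, Finset.mem_range]; exact hfxk
      rw [← hSL] at this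
      obtain ⟨x', hx', hxe⟩ := Finset.mem_image.mp this
      rw [hL, Finset.mem_range] at hx'
      have h1 := hgf x' (by omega)
      have h2 := hgf x hx
      rw [hxe] at h1
      omega
  refine ⟨⟨hk0, by omega, fun p q hp hq hqn => ?_⟩, hfwd⟩
  have hgp : gv p < G₂.n := hgv p (by omega)
  have hgq : gv q < G₂.n := hgv q hqn
  have hgpk : gv p < k := by
    have := (hfwd (gv p) hgp)
    rw [hfg p (by omega)] at this
    omega
  have hgqk : ¬ gv q < k := by
    intro hc
    have := (hfwd (gv q) hgq).mp hc
    rw [hfg q hqn] at this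
    omega
  have := (hef (gv p) (gv q) hgp hgq).mpr (hall _ _ hgpk (by omega) hgq)
  rwa [hfg p (by omega), hfg q hqn] at this

end Graph

namespace Graph
variable {B : Type}

lemma realize_iso (unr : B → Bool) : ∀ (n : ℕ) (G₁ G₂ : Graph B), G₁.n = n →
    G₁.TopOrdered → G₂.TopOrdered → ∀ Δ₁ Δ₂, G₁.realize = some Δ₁ →
    G₂.realize = some Δ₂ → G₁.Iso G₂ → CtxEquiv unr Δ₁ Δ₂ := by
  intro n
  induction n using Nat.strong_induction_on with
  | _ n ih =>
  intro G₁ G₂ hGn ht₁ ht₂ Δ₁ Δ₂ h₁ h₂ hiso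
  obtain ⟨hn, f, hfb, he, hl⟩ := hiso
  by_cases h0 : G₁.n = 0
  · rw [realize_zero h0, Option.some_inj] at h₁
    rw [realize_zero (by omega), Option.some_inj] at h₂
    subst h₁; subst h₂
    exact CtxEquiv.refl _
  by_cases hone : G₁.n = 1
  · rw [realize_one hone, Option.some_inj] at h₁
    rw [realize_one (by omega), Option.some_inj] at h₂
    subst h₁; subst h₂
    have h0n : (0:ℕ) < G₁.n := by omega
    have hfl := hl ⟨0, h0n⟩
    have hz : (f ⟨0, h0n⟩).val = 0 := by
      have := (f ⟨0, h0n⟩).isLt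
      omega
    rw [hz] at hfl
    have hfl' : G₁.label 0 = G₂.label 0 := hfl
    rw [hfl']
    exact CtxEquiv.refl _
  have h2 : 2 ≤ G₁.n := by omega
  set E := Equiv.ofBijective f hfb with hEdef
  set fv : ℕ → ℕ := fun z => if h : z < G₁.n then (f ⟨z, h⟩).val else 0 with hfvdef
  set gv : ℕ → ℕ := fun z => if h : z < G₁.n then (E.symm ⟨z, h⟩).val else 0 with hgvdef
  have hfveq : ∀ (x : ℕ) (hx : x < G₁.n), fv x = (f ⟨x, hx⟩).val := by
    intro x hx
    simp only [hfvdef]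
    rw [dif_pos hx]
  have hgveq : ∀ (x : ℕ) (hx : x < G₁.n), gv x = (E.symm ⟨x, hx⟩).val := by
    intro x hx
    simp only [hgvdef]
    rw [dif_pos hx]
  have hfv : ∀ x, x < G₁.n → fv x < G₁.n := by
    intro x hx
    rw [hfveq x hx]
    exact (f ⟨x, hx⟩).isLt
  have hgv : ∀ x, x < G₁.n → gv x < G₁.n := by
    intro x hx
    rw [hgveq x hx]
    exact (E.symm ⟨x, hx⟩).isLt
  have hgf : ∀ x, x < G₁.n → gv (fv x) = x := by
    intro x hx
    rw [hfveq x hx, hgveq _ (f ⟨x, hx⟩).isLt]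
    have h2' : E.symm (f ⟨x, hx⟩) = ⟨x, hx⟩ := E.symm_apply_apply ⟨x, hx⟩
    calc (E.symm ⟨(f ⟨x, hx⟩).val, (f ⟨x, hx⟩).isLt⟩).val
        = (E.symm (f ⟨x, hx⟩)).val := rfl
      _ = x := by rw [h2']
  have hfg : ∀ x, x < G₁.n → fv (gv x) = x := by
    intro x hx
    rw [hgveq x hx, hfveq _ (E.symm ⟨x, hx⟩).isLt]
    have h2' : f (E.symm ⟨x, hx⟩) = ⟨x, hx⟩ := E.apply_symm_apply ⟨x, hx⟩
    calc (f ⟨(E.symm ⟨x, hx⟩).val, (E.symm ⟨x, hx⟩).isLt⟩).val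
        = (f (E.symm ⟨x, hx⟩)).val := rfl
      _ = x := by rw [h2']
  have hef : ∀ x y, x < G₁.n → y < G₁.n → (G₁.edge (fv x) (fv y) ↔ G₂.edge x y) := by
    intro x y hx hy
    rw [hfveq x hx, hfveq y hy]
    exact he ⟨x, hx⟩ ⟨y, hy⟩
  have hlf : ∀ x, x < G₁.n → G₁.label (fv x) = G₂.label x := by
    intro x hx
    rw [hfveq x hx]
    exact hl ⟨x, hx⟩
  have hef2 : ∀ x y, x < G₂.n → y < G₂.n → (G₁.edge (fv x) (fv y) ↔ G₂.edge x y) :=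
    fun x y hx hy => hef x y (by omega) (by omega)
  have heg : ∀ x y, x < G₁.n → y < G₁.n → (G₂.edge (gv x) (gv y) ↔ G₁.edge x y) := by
    intro x y hx hy
    have := hef (gv x) (gv y) (hgv x hx) (hgv y hy)
    rw [hfg x hx, hfg y hy] at this
    exact this.symm
  have hfvB : ∀ x, x < G₂.n → fv x < G₁.n := fun x hx => hfv x (by omega)
  have hgvB : ∀ x, x < G₁.n → gv x < G₂.n := fun x hx => by have := hgv x hx; omega
  have hgfB : ∀ x, x < G₂.n → gv (fv x) = x := fun x hx => hgf x (by omega)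
  have hconn21 : ∀ x y, x < G₁.n → G₂.Conn x y → G₁.Conn (fv x) (fv y) := by
    intro x y hx h
    exact conn_transport_nat hn fv hef2 x y (by omega) h
  have hconn12 : ∀ x y, x < G₁.n → G₁.Conn x y → G₂.Conn (gv x) (gv y) := by
    intro x y hx h
    exact conn_transport_nat (G₁ := G₂) (G₂ := G₁) hn.symm gv heg x y hx h
  by_cases hu₁ : ∃ k, G₁.UnionCut k
  · -- UNION CASE
    have hu₂ : ∃ k, G₂.UnionCut k := by
      by_contra hnu₂
      have hconn₂ := connected_of_no_unionCut h₂ hnu₂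
      obtain ⟨k, hk⟩ := hu₁
      have hkn : k < G₁.n := hk.2.1
      have hc2 : G₂.Conn (gv 0) (gv k) := hconn₂ (gv 0) (gv k) (hgvB 0 (by omega))
        (hgvB k (by omega))
      have hc1 : G₁.Conn (fv (gv 0)) (fv (gv k)) := hconn21 (gv 0) (gv k)
        (hgv 0 (by omega)) hc2
      rw [hfg 0 (by omega), hfg k (by omega)] at hc1
      have := (conn_confine_lo hk ht₁ hc1 hk.1).1
      omega
    obtain ⟨Δa₂, Δb₂, hΔa₂, hΔb₂, rfl⟩ := realize_elim_union (by omega) hu₂ h₂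
    set k₂ := sInf {k | G₂.UnionCut k} with hk₂def
    have hk₂ : G₂.UnionCut k₂ := Nat.sInf_mem hu₂
    have hk₂n : k₂ < G₂.n := hk₂.2.1
    have hk₂0 : 0 < k₂ := hk₂.1
    have hcl₂ : ∀ j, j < G₂.n → (G₂.Conn 0 j ↔ j < k₂) := by
      intro j hj
      constructor
      · intro hc
        exact (conn_confine_lo hk₂ ht₂ hc hk₂0).1
      · intro hjk
        exact conn_lift_lo (connected_of_no_unionCut hΔa₂ (min_cutLo_no_unionCut hu₂) 0 j
          (show (0:ℕ) < k₂ from hk₂0) (show j < k₂ from hjk))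
    have h0n : (0:ℕ) < G₁.n := by omega
    obtain ⟨a, b, hai, hib, hbn, hcls0⟩ := classes_interval _ G₁ rfl ht₁ _ h₁ (fv 0)
      (hfv 0 h0n)
    have hca : G₁.Conn a (fv 0) :=
      conn_symm ((hcls0 a (by omega)).mpr ⟨le_refl a, by omega⟩)
    have hclsa : ∀ j, j < G₁.n → (G₁.Conn a j ↔ (a ≤ j ∧ j < b)) := by
      intro j hj
      constructor
      · intro hc
        exact (hcls0 j hj).mp (conn_trans (conn_symm hca) hc)
      · intro hb'
        exact conn_trans hca ((hcls0 j hj).mpr hb')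
    have hmem : ∀ x, x < G₂.n → (x < k₂ ↔ (a ≤ fv x ∧ fv x < b)) := by
      intro x hx
      constructor
      · intro hxk
        have hc2 : G₂.Conn 0 x := (hcl₂ x hx).mpr hxk
        have hc1 : G₁.Conn (fv 0) (fv x) := hconn21 0 x h0n hc2
        exact (hclsa (fv x) (hfvB x hx)).mp (conn_trans hca hc1)
      · intro hbnd
        have hc1 : G₁.Conn a (fv x) := (hclsa _ (hfvB x hx)).mpr hbnd
        have hc1' : G₁.Conn (fv 0) (fv x) := conn_trans (conn_symm hca) hc1
        have hc2 : G₂.Conn (gv (fv 0)) (gv (fv x)) := hconn12 (fv 0) (fv x) (hfv 0 h0n) hc1'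
        rw [hgf 0 h0n, hgf x (by omega)] at hc2
        exact (hcl₂ x hx).mp hc2
    have hba : b - a = k₂ := by
      have hle1 : k₂ ≤ b - a := by
        have hinj : Function.Injective (fun x : Fin k₂ =>
            (⟨fv x.val - a, by
              have hx2 : x.val < G₂.n := by omega
              have := (hmem x.val hx2).mp x.isLt
              omega⟩ : Fin (b - a))) := by
          intro x₁ x₂ hxy
          injection hxy with hv
          have hb₁ := (hmem x₁.val (by omega)).mp x₁.isLt
          have hb₂ := (hmem x₂.val (by omega)).mp x₂.isLt
          have hfeq : fv x₁.val = fv x₂.val := by omega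
          have hq1 := hgf x₁.val (by omega)
          have hq2 := hgf x₂.val (by omega)
          rw [hfeq] at hq1
          exact Fin.ext (by omega)
        calc k₂ = Fintype.card (Fin k₂) := (Fintype.card_fin k₂).symm
          _ ≤ Fintype.card (Fin (b - a)) := Fintype.card_le_of_injective _ hinj
          _ = b - a := Fintype.card_fin _
      have hle2 : b - a ≤ k₂ := by
        have hinj : Function.Injective (fun y : Fin (b - a) =>
            (⟨gv (y.val + a), by
              have hya : y.val + a < G₁.n := by omega
              have hgya := hgvB _ hya
              have hfgya := hfg _ hya
              exact (hmem (gv (y.val + a)) hgya).mpr ⟨by omega, by omega⟩⟩ : Fin k₂)) := by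
          intro y₁ y₂ hxy
          injection hxy with hv
          have hya₁ : y₁.val + a < G₁.n := by omega
          have hya₂ : y₂.val + a < G₁.n := by omega
          have hq1 := hfg _ hya₁
          have hq2 := hfg _ hya₂
          rw [hv] at hq1
          exact Fin.ext (by omega)
        calc b - a = Fintype.card (Fin (b - a)) := (Fintype.card_fin _).symm
          _ ≤ Fintype.card (Fin k₂) := Fintype.card_le_of_injective _ hinj
          _ = k₂ := Fintype.card_fin _
      omega
    obtain ⟨D₁, D₂, hD₁, hD₂, hEq⟩ := peel unr _ G₁ rfl ht₁ _ h₁ a b (by omega)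
      (by omega) hbn hclsa
    -- iso of the slice with the lower cut of G₂
    have hiso1 : (G₁.slice a b).Iso (G₂.cutLo k₂) := by
      refine ⟨hba, ?_⟩
      have hmb : ∀ x : Fin ((G₁.slice a b).n), fv x.val - a < (G₁.slice a b).n := by
        intro x
        have hx' : x.val < b - a := x.isLt
        have := (hmem x.val (by omega)).mp (by omega)
        show fv x.val - a < b - a
        omega
      refine ⟨fun x => ⟨fv x.val - a, hmb x⟩, ?_, ?_, ?_⟩
      · rw [← Finite.injective_iff_bijective]
        intro x₁ x₂ hxy
        injection hxy with hv
        have hx₁' : x₁.val < b - a := x₁.isLt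
        have hx₂' : x₂.val < b - a := x₂.isLt
        have hb₁ := (hmem x₁.val (by omega)).mp (by omega)
        have hb₂ := (hmem x₂.val (by omega)).mp (by omega)
        have hfeq : fv x₁.val = fv x₂.val := by omega
        have hq1 := hgf x₁.val (by omega)
        have hq2 := hgf x₂.val (by omega)
        rw [hfeq] at hq1
        exact Fin.ext (by omega)
      · intro i j
        have hi' : i.val < b - a := i.isLt
        have hj' : j.val < b - a := j.isLt
        have hbi := (hmem i.val (by omega)).mp (by omega)
        have hbj := (hmem j.val (by omega)).mp (by omega)
        show (G₁.edge (fv i.val - a + a) (fv j.val - a + a) ∧ fv i.val - a + a < b ∧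
          fv j.val - a + a < b) ↔ (G₂.edge i.val j.val ∧ i.val < k₂ ∧ j.val < k₂)
        rw [show fv i.val - a + a = fv i.val by omega,
          show fv j.val - a + a = fv j.val by omega]
        constructor
        · rintro ⟨e, -, -⟩
          exact ⟨(hef i.val j.val (by omega) (by omega)).mp e, by omega, by omega⟩
        · rintro ⟨e, -, -⟩
          exact ⟨(hef i.val j.val (by omega) (by omega)).mpr e, by omega, by omega⟩
      · intro i
        have hi' : i.val < b - a := i.isLt
        have hbi := (hmem i.val (by omega)).mp (by omega)
        show G₁.label (fv i.val - a + a) = G₂.label i.val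
        rw [show fv i.val - a + a = fv i.val by omega]
        exact hlf i.val (by omega)
    -- iso of the deleted graph with the upper cut of G₂
    have key : ∀ u, u < G₂.n → ¬ u < k₂ →
        ((if (if fv u < a then fv u else fv u - k₂) < a then (if fv u < a then fv u else fv u - k₂)
          else (if fv u < a then fv u else fv u - k₂) + (b - a)) = fv u ∧
         (if fv u < a then fv u else fv u - k₂) < G₁.n - (b - a)) := by
      intro u hu hku
      have hbu := hfv u (by omega)
      have hnb : ¬ (a ≤ fv u ∧ fv u < b) := fun hc => hku ((hmem u hu).mpr hc)
      constructor
      · split_ifs <;> omega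
      · split_ifs <;> omega
    have hiso2 : (G₁.del a b).Iso (G₂.cutHi k₂) := by
      refine ⟨show G₁.n - (b - a) = G₂.n - k₂ by omega, ?_⟩
      have hmb : ∀ x : Fin ((G₁.del a b).n),
          (if fv (x.val + k₂) < a then fv (x.val + k₂) else fv (x.val + k₂) - k₂) <
            (G₁.del a b).n := by
        intro x
        have hx' : x.val < G₁.n - (b - a) := x.isLt
        have := (key (x.val + k₂) (by omega) (by omega)).2
        show _ < G₁.n - (b - a)
        exact this
      refine ⟨fun x => ⟨if fv (x.val + k₂) < a then fv (x.val + k₂) else fv (x.val + k₂) - k₂,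
        hmb x⟩, ?_, ?_, ?_⟩
      · rw [← Finite.injective_iff_bijective]
        intro x₁ x₂ hxy
        injection hxy with hv
        have hx₁' : x₁.val < G₁.n - (b - a) := x₁.isLt
        have hx₂' : x₂.val < G₁.n - (b - a) := x₂.isLt
        have hbu₁ := hfv (x₁.val + k₂) (by omega)
        have hbu₂ := hfv (x₂.val + k₂) (by omega)
        have hnb₁ : ¬ (a ≤ fv (x₁.val + k₂) ∧ fv (x₁.val + k₂) < b) :=
          fun hc => by have := (hmem _ (by omega)).mpr hc; omega
        have hnb₂ : ¬ (a ≤ fv (x₂.val + k₂) ∧ fv (x₂.val + k₂) < b) :=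
          fun hc => by have := (hmem _ (by omega)).mpr hc; omega
        have hfeq : fv (x₁.val + k₂) = fv (x₂.val + k₂) := by
          split_ifs at hv <;> omega
        have hq1 := hgf (x₁.val + k₂) (by omega)
        have hq2 := hgf (x₂.val + k₂) (by omega)
        rw [hfeq] at hq1
        exact Fin.ext (by omega)
      · intro i j
        have hi' : i.val < G₁.n - (b - a) := i.isLt
        have hj' : j.val < G₁.n - (b - a) := j.isLt
        obtain ⟨e1i, e2i⟩ := key (i.val + k₂) (by omega) (by omega)
        obtain ⟨e1j, e2j⟩ := key (j.val + k₂) (by omega) (by omega)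
        show ((if fv (i.val + k₂) < a then fv (i.val + k₂) else fv (i.val + k₂) - k₂) <
            G₁.n - (b - a) ∧
          (if fv (j.val + k₂) < a then fv (j.val + k₂) else fv (j.val + k₂) - k₂) <
            G₁.n - (b - a) ∧
          G₁.edge
            (if (if fv (i.val + k₂) < a then fv (i.val + k₂) else fv (i.val + k₂) - k₂) < a
              then (if fv (i.val + k₂) < a then fv (i.val + k₂) else fv (i.val + k₂) - k₂)
              else (if fv (i.val + k₂) < a then fv (i.val + k₂) else fv (i.val + k₂) - k₂) +
                (b - a))
            (if (if fv (j.val + k₂) < a then fv (j.val + k₂) else fv (j.val + k₂) - k₂) < a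
              then (if fv (j.val + k₂) < a then fv (j.val + k₂) else fv (j.val + k₂) - k₂)
              else (if fv (j.val + k₂) < a then fv (j.val + k₂) else fv (j.val + k₂) - k₂) +
                (b - a))) ↔ G₂.edge (i.val + k₂) (j.val + k₂)
        rw [e1i, e1j]
        constructor
        · rintro ⟨-, -, e⟩
          exact (hef _ _ (by omega) (by omega)).mp e
        · intro e
          exact ⟨e2i, e2j, (hef _ _ (by omega) (by omega)).mpr e⟩
      · intro i
        have hi' : i.val < G₁.n - (b - a) := i.isLt
        obtain ⟨e1i, e2i⟩ := key (i.val + k₂) (by omega) (by omega)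
        show (if (if fv (i.val + k₂) < a then fv (i.val + k₂) else fv (i.val + k₂) - k₂) < a
            then G₁.label (if fv (i.val + k₂) < a then fv (i.val + k₂) else fv (i.val + k₂) - k₂)
            else G₁.label
              ((if fv (i.val + k₂) < a then fv (i.val + k₂) else fv (i.val + k₂) - k₂) +
                (b - a))) = G₂.label (i.val + k₂)
        rw [← apply_ite G₁.label, e1i]
        exact hlf _ (by omega)
    have hq1 : CtxEquiv unr D₁ Δa₂ := ih k₂ (by omega) (G₁.slice a b) (G₂.cutLo k₂)
      (show (G₁.slice a b).n = k₂ from hba) (topOrdered_slice ht₁ a b)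
      (topOrdered_cutLo ht₂ k₂) D₁ Δa₂ hD₁ hΔa₂ hiso1
    have hq2 : CtxEquiv unr D₂ Δb₂ := ih (G₁.n - (b - a)) (by omega) (G₁.del a b)
      (G₂.cutHi k₂) rfl (topOrdered_del ht₁ a b) (topOrdered_cutHi ht₂ k₂) D₂ Δb₂ hD₂
      hΔb₂ hiso2
    exact CtxEquiv.trans _ _ _ hEq (ctx_par_congr unr hq1 hq2)
  · -- JOIN CASE
    have hnu₂ : ¬ ∃ k, G₂.UnionCut k := by
      rintro ⟨k, hk⟩
      have hconn₁ := connected_of_no_unionCut h₁ hu₁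
      have hkn : k < G₂.n := hk.2.1
      have hc1 : G₁.Conn (fv 0) (fv k) := hconn₁ (fv 0) (fv k) (hfv 0 (by omega))
        (hfv k (by omega))
      have hc2 : G₂.Conn (gv (fv 0)) (gv (fv k)) := hconn12 (fv 0) (fv k)
        (hfv 0 (by omega)) hc1
      rw [hgf 0 (by omega), hgf k (by omega)] at hc2
      have := (conn_confine_lo hk ht₂ hc2 hk.1).1
      omega
    obtain ⟨hj₁, Δa₁, Δb₁, hΔa₁, hΔb₁, rfl⟩ := realize_elim_join h2 hu₁ h₁
    obtain ⟨hj₂, Δa₂, Δb₂, hΔa₂, hΔb₂, rfl⟩ := realize_elim_join (by omega) hnu₂ h₂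
    have hJset : {k | G₁.JoinCut k} = {k | G₂.JoinCut k} := by
      ext k
      simp only [Set.mem_setOf_eq]
      constructor
      · intro hk1
        exact (joinCut_transport (G₁ := G₂) (G₂ := G₁) hn.symm ht₂ gv fv hgvB hfvB hfg
          hgfB heg hk1).1
      · intro hk2
        exact (joinCut_transport hn ht₁ fv gv hfvB hgvB hgfB hfg hef2 hk2).1
    set k := sInf {k | G₁.JoinCut k} with hkdef
    have hksets : sInf {k | G₂.JoinCut k} = k := by rw [hkdef, hJset]
    rw [hksets] at hΔa₂ hΔb₂
    have hk₁ : G₁.JoinCut k := Nat.sInf_mem hj₁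
    have hkn : k < G₁.n := hk₁.2.1
    have hk0 : 0 < k := hk₁.1
    have hk₂ : G₂.JoinCut k := by
      have : k ∈ {k | G₁.JoinCut k} := hk₁
      rw [hJset] at this
      exact this
    have hlow := (joinCut_transport hn ht₁ fv gv hfvB hgvB hgfB hfg hef2 hk₂).2
    have hisoLo : (G₁.cutLo k).Iso (G₂.cutLo k) := by
      refine ⟨rfl, ?_⟩
      have hmb : ∀ x : Fin ((G₁.cutLo k).n), fv x.val < (G₁.cutLo k).n := by
        intro x
        have hx' : x.val < k := x.isLt
        show fv x.val < k
        exact (hlow x.val (by omega)).mp hx'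
      refine ⟨fun x => ⟨fv x.val, hmb x⟩, ?_, ?_, ?_⟩
      · rw [← Finite.injective_iff_bijective]
        intro x₁ x₂ hxy
        injection hxy with hv
        have hx₁' : x₁.val < k := x₁.isLt
        have hx₂' : x₂.val < k := x₂.isLt
        have hq1 := hgf x₁.val (by omega)
        have hq2 := hgf x₂.val (by omega)
        rw [hv] at hq1
        exact Fin.ext (by omega)
      · intro i j
        have hi' : i.val < k := i.isLt
        have hj' : j.val < k := j.isLt
        show (G₁.edge (fv i.val) (fv j.val) ∧ fv i.val < k ∧ fv j.val < k) ↔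
          (G₂.edge i.val j.val ∧ i.val < k ∧ j.val < k)
        constructor
        · rintro ⟨e, -, -⟩
          exact ⟨(hef i.val j.val (by omega) (by omega)).mp e, hi', hj'⟩
        · rintro ⟨e, -, -⟩
          exact ⟨(hef i.val j.val (by omega) (by omega)).mpr e,
            (hlow i.val (by omega)).mp hi', (hlow j.val (by omega)).mp hj'⟩
      · intro i
        have hi' : i.val < k := i.isLt
        show G₁.label (fv i.val) = G₂.label i.val
        exact hlf i.val (by omega)
    have hisoHi : (G₁.cutHi k).Iso (G₂.cutHi k) := by
      refine ⟨show G₁.n - k = G₂.n - k by omega, ?_⟩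
      have hfacts : ∀ x : ℕ, x < G₁.n - k → (fv (x + k) < G₁.n ∧ ¬ fv (x + k) < k) := by
        intro x hx
        refine ⟨hfv (x + k) (by omega), ?_⟩
        intro hc
        have := (hlow (x + k) (by omega)).mpr hc
        omega
      have hmb : ∀ x : Fin ((G₁.cutHi k).n), fv (x.val + k) - k < (G₁.cutHi k).n := by
        intro x
        have hx' : x.val < G₁.n - k := x.isLt
        obtain ⟨hq1, hq2⟩ := hfacts x.val hx'
        show fv (x.val + k) - k < G₁.n - k
        omega
      refine ⟨fun x => ⟨fv (x.val + k) - k, hmb x⟩, ?_, ?_, ?_⟩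
      · rw [← Finite.injective_iff_bijective]
        intro x₁ x₂ hxy
        injection hxy with hv
        have hx₁' : x₁.val < G₁.n - k := x₁.isLt
        have hx₂' : x₂.val < G₁.n - k := x₂.isLt
        obtain ⟨ha₁, hb₁⟩ := hfacts x₁.val hx₁'
        obtain ⟨ha₂, hb₂⟩ := hfacts x₂.val hx₂'
        have hfeq : fv (x₁.val + k) = fv (x₂.val + k) := by omega
        have hq1 := hgf (x₁.val + k) (by omega)
        have hq2 := hgf (x₂.val + k) (by omega)
        rw [hfeq] at hq1
        exact Fin.ext (by omega)
      · intro i j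
        have hi' : i.val < G₁.n - k := i.isLt
        have hj' : j.val < G₁.n - k := j.isLt
        obtain ⟨ha₁, hb₁⟩ := hfacts i.val hi'
        obtain ⟨ha₂, hb₂⟩ := hfacts j.val hj'
        show G₁.edge (fv (i.val + k) - k + k) (fv (j.val + k) - k + k) ↔
          G₂.edge (i.val + k) (j.val + k)
        rw [show fv (i.val + k) - k + k = fv (i.val + k) by omega,
          show fv (j.val + k) - k + k = fv (j.val + k) by omega]
        exact hef _ _ (by omega) (by omega)
      · intro i
        have hi' : i.val < G₁.n - k := i.isLt
        obtain ⟨ha₁, hb₁⟩ := hfacts i.val hi'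
        show G₁.label (fv (i.val + k) - k + k) = G₂.label (i.val + k)
        rw [show fv (i.val + k) - k + k = fv (i.val + k) by omega]
        exact hlf _ (by omega)
    have hq1 := ih k (by omega) (G₁.cutLo k) (G₂.cutLo k) rfl (topOrdered_cutLo ht₁ k)
      (topOrdered_cutLo ht₂ k) Δa₁ Δa₂ hΔa₁ hΔa₂ hisoLo
    have hq2 := ih (G₁.n - k) (by omega) (G₁.cutHi k) (G₂.cutHi k) rfl
      (topOrdered_cutHi ht₁ k) (topOrdered_cutHi ht₂ k) Δb₁ Δb₂ hΔb₁ hΔb₂ hisoHi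
    exact ctx_comma_congr unr hq1 hq2

end Graph

namespace Graph

/-- Every index interval of length at least 2 admits an internal split that is
either union-style (no crossing edges) or join-style (all crossing edges). -/
def GoodIntervals {B : Type} (G : Graph B) : Prop :=
  ∀ a b, a + 2 ≤ b → b ≤ G.n → ∃ k, a < k ∧ k < b ∧
    ((∀ i j, a ≤ i → i < k → k ≤ j → j < b → ¬ G.edge i j) ∨
     (∀ i j, a ≤ i → i < k → k ≤ j → j < b → G.edge i j))

lemma goodIntervals_cutLo {B : Type} {G : Graph B} (h : G.GoodIntervals) (k : ℕ)
    (hk : k ≤ G.n) : (G.cutLo k).GoodIntervals := by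
  intro a b hab hbn
  have hbk : b ≤ k := hbn
  obtain ⟨k', h1', h2', h3'⟩ := h a b hab (by omega)
  refine ⟨k', h1', h2', ?_⟩
  rcases h3' with hc | hc
  · left; intro i j hi hik hkj hjb e
    exact hc i j hi hik hkj hjb e.1
  · right; intro i j hi hik hkj hjb
    exact ⟨hc i j hi hik hkj hjb, by omega, by omega⟩

lemma goodIntervals_cutHi {B : Type} {G : Graph B} (h : G.GoodIntervals) (k : ℕ) :
    (G.cutHi k).GoodIntervals := by
  intro a b hab hbn
  have hbk : b ≤ G.n - k := hbn
  obtain ⟨k', h1', h2', h3'⟩ := h (a + k) (b + k) (by omega) (by omega)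
  refine ⟨k' - k, by omega, by omega, ?_⟩
  rcases h3' with hc | hc
  · left; intro i j hi hik hkj hjb e
    exact hc (i + k) (j + k) (by omega) (by omega) (by omega) (by omega) e
  · right; intro i j hi hik hkj hjb
    exact hc (i + k) (j + k) (by omega) (by omega) (by omega) (by omega)

lemma realize_defined {B : Type} : ∀ (n : ℕ) (G : Graph B), G.n = n → G.GoodIntervals →
    ∃ Δ, G.realize = some Δ := by
  intro n
  induction n using Nat.strong_induction_on with
  | _ n ih =>
  intro G hGn hGI
  by_cases h0 : G.n = 0
  · exact ⟨_, realize_zero h0⟩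
  by_cases h1 : G.n = 1
  · exact ⟨_, realize_one h1⟩
  by_cases hu : ∃ k, G.UnionCut k
  · have hk₀ : G.UnionCut (sInf {k | G.UnionCut k}) := Nat.sInf_mem hu
    set k₀ := sInf {k | G.UnionCut k} with hk₀def
    have hk₀n : k₀ < G.n := hk₀.2.1
    have hk₀0 : 0 < k₀ := hk₀.1
    obtain ⟨Δa, ha⟩ := ih k₀ (by omega) (G.cutLo k₀) rfl (goodIntervals_cutLo hGI k₀ (by omega))
    obtain ⟨Δb, hb⟩ := ih (G.n - k₀) (by omega) (G.cutHi k₀) rfl (goodIntervals_cutHi hGI k₀)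
    refine ⟨Δa.par Δb, ?_⟩
    rw [realize_eq, if_neg h0, if_neg h1, dif_pos hu, ← hk₀def, ha, hb]
    rfl
  · obtain ⟨k, hk1, hk2, hk3⟩ := hGI 0 G.n (by omega) (le_refl _)
    have hj : ∃ k, G.JoinCut k := by
      rcases hk3 with hc | hc
      · exfalso
        apply hu
        refine ⟨k, by omega, hk2, fun i j hi hj => ?_⟩
        intro e
        have := G.edge_lt _ _ e
        exact hc i j (by omega) hi hj (by omega) e
      · exact ⟨k, by omega, hk2, fun i j hi hj hjn => hc i j (by omega) hi hj hjn⟩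
    have hk₀ : G.JoinCut (sInf {k | G.JoinCut k}) := Nat.sInf_mem hj
    set k₀ := sInf {k | G.JoinCut k} with hk₀def
    have hk₀n : k₀ < G.n := hk₀.2.1
    have hk₀0 : 0 < k₀ := hk₀.1
    obtain ⟨Δa, ha⟩ := ih k₀ (by omega) (G.cutLo k₀) rfl (goodIntervals_cutLo hGI k₀ (by omega))
    obtain ⟨Δb, hb⟩ := ih (G.n - k₀) (by omega) (G.cutHi k₀) rfl (goodIntervals_cutHi hGI k₀)
    refine ⟨Δa.comma Δb, ?_⟩
    rw [realize_eq, if_neg h0, if_neg h1, dif_neg hu, dif_pos hj, ← hk₀def, ha, hb]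
    rfl

end Graph

section Glue
variable {B : Type} [Inhabited B]

lemma topOrdered_interpG (unr : B → Bool) : ∀ Γ : GCtx B, (GCtx.interpG unr Γ).TopOrdered := by
  intro Γ
  induction Γ with
  | empty => intro i j h; exact h.elim
  | bind b =>
    intro i j h
    simp only [GCtx.interpG] at h
    split_ifs at h
    · exact h.elim
    · exact h.elim
  | comma Γ₁ Γ₂ ih₁ ih₂ =>
    intro i j h
    rcases h with h | ⟨hi, hj, h⟩ | ⟨hi, hj1, hj2⟩
    · exact ih₁ _ _ h
    · have := ih₂ _ _ h
      omega
    · omega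
  | par Γ₁ Γ₂ ih₁ ih₂ =>
    intro i j h
    rcases h with h | ⟨hi, hj, h⟩
    · exact ih₁ _ _ h
    · have := ih₂ _ _ h
      omega

lemma good_interpG (unr : B → Bool) : ∀ Γ : GCtx B, (GCtx.interpG unr Γ).GoodIntervals := by
  intro Γ
  induction Γ with
  | empty =>
    intro a b hab hbn
    have : b ≤ 0 := hbn
    omega
  | bind b =>
    intro a b' hab hbn
    have hle : (GCtx.interpG unr (.bind b)).n ≤ 1 := by
      simp only [GCtx.interpG]
      split_ifs
      · exact Nat.le_succ 0
      · exact le_refl 1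
    omega
  | comma Γ₁ Γ₂ ih₁ ih₂ =>
    intro a b hab hbn
    have hbn' : b ≤ (GCtx.interpG unr Γ₁).n + (GCtx.interpG unr Γ₂).n := hbn
    by_cases hb1 : b ≤ (GCtx.interpG unr Γ₁).n
    · obtain ⟨k, hk1, hk2, hk3⟩ := ih₁ a b hab hb1
      refine ⟨k, hk1, hk2, ?_⟩
      rcases hk3 with hcase | hcase
      · left
        intro i j hi hik hkj hjb e
        rcases e with e | ⟨hi', -, -⟩ | ⟨-, hj', -⟩
        · exact hcase i j hi hik hkj hjb e
        · omega
        · omega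
      · right
        intro i j hi hik hkj hjb
        exact Or.inl (hcase i j hi hik hkj hjb)
    · by_cases ha1 : (GCtx.interpG unr Γ₁).n ≤ a
      · obtain ⟨k, hk1, hk2, hk3⟩ := ih₂ (a - (GCtx.interpG unr Γ₁).n) (b - (GCtx.interpG unr Γ₁).n) (by omega) (by omega)
        refine ⟨k + (GCtx.interpG unr Γ₁).n, by omega, by omega, ?_⟩
        rcases hk3 with hcase | hcase
        · left
          intro i j hi hik hkj hjb e
          rcases e with e | ⟨hi', hj', e⟩ | ⟨hi', -, -⟩
          · have := ((GCtx.interpG unr Γ₁).edge_lt _ _ e).1; omega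
          · exact hcase (i - (GCtx.interpG unr Γ₁).n) (j - (GCtx.interpG unr Γ₁).n) (by omega) (by omega) (by omega) (by omega) e
          · omega
        · right
          intro i j hi hik hkj hjb
          exact Or.inr (Or.inl ⟨by omega, by omega,
            hcase (i - (GCtx.interpG unr Γ₁).n) (j - (GCtx.interpG unr Γ₁).n) (by omega) (by omega) (by omega) (by omega)⟩)
      · refine ⟨(GCtx.interpG unr Γ₁).n, by omega, by omega, Or.inr ?_⟩
        intro i j hi hik hkj hjb
        exact Or.inr (Or.inr ⟨by omega, by omega, by omega⟩)
  | par Γ₁ Γ₂ ih₁ ih₂ =>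
    intro a b hab hbn
    have hbn' : b ≤ (GCtx.interpG unr Γ₁).n + (GCtx.interpG unr Γ₂).n := hbn
    by_cases hb1 : b ≤ (GCtx.interpG unr Γ₁).n
    · obtain ⟨k, hk1, hk2, hk3⟩ := ih₁ a b hab hb1
      refine ⟨k, hk1, hk2, ?_⟩
      rcases hk3 with hcase | hcase
      · left
        intro i j hi hik hkj hjb e
        rcases e with e | ⟨hi', -, -⟩
        · exact hcase i j hi hik hkj hjb e
        · omega
      · right
        intro i j hi hik hkj hjb
        exact Or.inl (hcase i j hi hik hkj hjb)
    · by_cases ha1 : (GCtx.interpG unr Γ₁).n ≤ a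
      · obtain ⟨k, hk1, hk2, hk3⟩ := ih₂ (a - (GCtx.interpG unr Γ₁).n) (b - (GCtx.interpG unr Γ₁).n) (by omega) (by omega)
        refine ⟨k + (GCtx.interpG unr Γ₁).n, by omega, by omega, ?_⟩
        rcases hk3 with hcase | hcase
        · left
          intro i j hi hik hkj hjb e
          rcases e with e | ⟨hi', hj', e⟩
          · have := ((GCtx.interpG unr Γ₁).edge_lt _ _ e).1; omega
          · exact hcase (i - (GCtx.interpG unr Γ₁).n) (j - (GCtx.interpG unr Γ₁).n) (by omega) (by omega) (by omega) (by omega) e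
        · right
          intro i j hi hik hkj hjb
          exact Or.inr ⟨by omega, by omega,
            hcase (i - (GCtx.interpG unr Γ₁).n) (j - (GCtx.interpG unr Γ₁).n) (by omega) (by omega) (by omega) (by omega)⟩
      · refine ⟨(GCtx.interpG unr Γ₁).n, by omega, by omega, Or.inl ?_⟩
        intro i j hi hik hkj hjb e
        rcases e with e | ⟨hi', -, -⟩
        · have := ((GCtx.interpG unr Γ₁).edge_lt _ _ e).2; omega
        · omega

end Glue




/-- **Realization respects isomorphism.** For contexts `Γ₁`, `Γ₂` containing
no unrestricted bindings, if `⟦Γ₁⟧ ≃ ⟦Γ₂⟧` then `⌜⟦Γ₁⟧⌝ ≡ ⌜⟦Γ₂⟧⌝`. -/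
theorem realize_respects_iso {B : Type} [Inhabited B] (unr : B → Bool)
    (Γ₁ Γ₂ : GCtx B)
    (h₁ : ∀ b ∈ GCtx.toList Γ₁, unr b = false)
    (h₂ : ∀ b ∈ GCtx.toList Γ₂, unr b = false)
    (hiso : Graph.Iso (GCtx.interpG unr Γ₁) (GCtx.interpG unr Γ₂)) :
    ∃ Δ₁ Δ₂ : GCtx B,
      Graph.realize (GCtx.interpG unr Γ₁) = some Δ₁ ∧
      Graph.realize (GCtx.interpG unr Γ₂) = some Δ₂ ∧
      CtxEquiv unr Δ₁ Δ₂ := by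
  obtain ⟨Δ₁, h₁⟩ := Graph.realize_defined _ (GCtx.interpG unr Γ₁) rfl (good_interpG unr Γ₁)
  obtain ⟨Δ₂, h₂⟩ := Graph.realize_defined _ (GCtx.interpG unr Γ₂) rfl (good_interpG unr Γ₂)
  exact ⟨Δ₁, Δ₂, h₁, h₂, Graph.realize_iso unr _ _ _ rfl (topOrdered_interpG unr Γ₁)
    (topOrdered_interpG unr Γ₂) Δ₁ Δ₂ h₁ h₂ hiso⟩

end LawOrder
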